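/- For every n ≥ 1, the number of spanning rooted forests of the path graph P_n equals F(2n), the 2n-th Fibonacci number. -/

import Mathlib

/-- A spanning rooted forest of a graph `G`: a spanning acyclic subgraph (given by its
edge set) together with a set of roots containing exactly one root in each tree
(connected component). -/
structure RootedForest {V : Type*} (G : SimpleGraph V) where
  edges : Set (Sym2 V)
  roots : Set V
  edges_sub : edges ⊆ G.edgeSet
  acyclic : (SimpleGraph.fromEdgeSet edges).IsAcyclic
  unique_root : ∀ v : V, ∃! r, r ∈ roots ∧ (SimpleGraph.fromEdgeSet edges).Reachable v r

namespace PFaux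
open SimpleGraph

variable {n : ℕ}

/-- value 1 = parent to the left; constraint: position 0 has no left neighbor -/
def Cone (n : ℕ) (f : Fin n → Fin 3) : Prop := ∀ (i : ℕ) (h : i < n), f ⟨i, h⟩ = 1 → 0 < i
/-- no pattern (2,1) on consecutive positions -/
def Ctwo (n : ℕ) (f : Fin n → Fin 3) : Prop :=
  ∀ (i : ℕ) (h : i + 1 < n), f ⟨i, by omega⟩ = 2 → f ⟨i + 1, h⟩ ≠ 1
/-- value 2 = parent to the right; last position has no right neighbor -/
def Cthree (n : ℕ) (f : Fin n → Fin 3) : Prop := ∀ (i : ℕ) (h : i < n), f ⟨i, h⟩ = 2 → i + 1 < n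

lemma fin3 : ∀ x : Fin 3, x = 0 ∨ x = 1 ∨ x = 2 := by decide

def ext (f : Fin n → Fin 3) (c : Fin 3) : Fin (n + 1) → Fin 3 :=
  fun v => if h : v.1 < n then f ⟨v.1, h⟩ else c

lemma ext_lt (f : Fin n → Fin 3) (c : Fin 3) {i : ℕ} (h : i < n) (h' : i < n + 1) :
    ext f c ⟨i, h'⟩ = f ⟨i, h⟩ := dif_pos h

lemma ext_ge (f : Fin n → Fin 3) (c : Fin 3) {i : ℕ} (h : ¬ i < n) (h' : i < n + 1) :
    ext f c ⟨i, h'⟩ = c := dif_neg h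

lemma ext_last (f : Fin n → Fin 3) (c : Fin 3) : ext f c (Fin.last n) = c :=
  dif_neg (lt_irrefl n)

lemma ext_init (g : Fin (n + 1) → Fin 3) (c : Fin 3) (hc : g (Fin.last n) = c) :
    ext (fun w : Fin n => g w.castSucc) c = g := by
  funext v
  unfold ext
  split
  · next h => exact congrArg g (Fin.ext rfl)
  · next h =>
    have : v = Fin.last n := Fin.ext (by have := v.2; simp [Fin.last]; omega)
    rw [this, hc]

lemma ncard_sigma {ι : Type*} [Fintype ι] {T : ι → Type*} [∀ i, Finite (T i)] :
    Nat.card (Σ i, T i) = ∑ i, Nat.card (T i) := by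
  letI : ∀ i, Fintype (T i) := fun i => Fintype.ofFinite _
  simp [Nat.card_eq_fintype_card]

def splitEquiv (Q : (Fin (n + 1) → Fin 3) → Prop) :
    {g // Q g} ≃ Σ c : Fin 3, {g // Q g ∧ g (Fin.last n) = c} where
  toFun g := ⟨g.1 (Fin.last n), ⟨g.1, g.2, rfl⟩⟩
  invFun p := ⟨p.2.1, p.2.2.1⟩
  left_inv g := rfl
  right_inv p := by
    obtain ⟨c, g, hQ, hc⟩ := p
    subst hc
    rfl

lemma card_split (Q : (Fin (n + 1) → Fin 3) → Prop) :
    Nat.card {g // Q g} =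
      ∑ c : Fin 3, Nat.card {g // Q g ∧ g (Fin.last n) = c} := by
  rw [Nat.card_congr (splitEquiv Q)]
  exact ncard_sigma

def extEquiv (c : Fin 3) (Q : (Fin (n + 1) → Fin 3) → Prop) (R : (Fin n → Fin 3) → Prop)
    (h : ∀ f, Q (ext f c) ↔ R f) :
    {g // Q g ∧ g (Fin.last n) = c} ≃ {f // R f} where
  toFun g := ⟨fun w => g.1 w.castSucc, by
    rw [← h]
    rw [ext_init g.1 c g.2.2]
    exact g.2.1⟩
  invFun f := ⟨ext f.1 c, (h f.1).2 f.2, ext_last _ _⟩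
  left_inv g := by
    apply Subtype.ext
    exact ext_init g.1 c g.2.2
  right_inv f := by
    apply Subtype.ext
    funext w
    exact ext_lt _ _ w.2 _

lemma Cone_ext (f : Fin n → Fin 3) (c : Fin 3) :
    Cone (n + 1) (ext f c) ↔ Cone n f ∧ (c = 1 → 0 < n) := by
  constructor
  · intro h
    refine ⟨fun i hi hfi => h i (by omega) (by rw [ext_lt f c hi]; exact hfi), fun hc => ?_⟩
    exact h n (by omega) (by rw [ext_ge f c (lt_irrefl n)]; exact hc)
  · rintro ⟨h1, h2⟩ i hi hfi
    by_cases h : i < n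
    · exact h1 i h (by rw [ext_lt f c h] at hfi; exact hfi)
    · have : i = n := by omega
      subst this
      rw [ext_ge f c h] at hfi
      exact h2 hfi
lemma Ctwo_ext (f : Fin n → Fin 3) (c : Fin 3) :
    Ctwo (n + 1) (ext f c) ↔ Ctwo n f ∧ (c = 1 → ∀ (h : 0 < n), f ⟨n - 1, by omega⟩ ≠ 2) := by
  constructor
  · intro h
    constructor
    · intro i hi h2 h1
      exact h i (by omega) (by rw [ext_lt f c (by omega)]; exact h2)
        (by rw [ext_lt f c hi]; exact h1)
    · intro hc hn h2
      refine h (n - 1) (by omega) (by rw [ext_lt f c (by omega)]; exact h2) ?_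
      have : n - 1 + 1 = n := by omega
      rw [show (⟨n - 1 + 1, by omega⟩ : Fin (n+1)) = ⟨n, by omega⟩ from Fin.ext (by simp [this])]
      rw [ext_ge f c (lt_irrefl n)]
      exact hc
  · rintro ⟨h1, h2⟩ i hi hf2 hf1
    by_cases h : i + 1 < n
    · rw [ext_lt f c (by omega)] at hf2
      rw [ext_lt f c h] at hf1
      exact h1 i h hf2 hf1
    · have hin : i + 1 = n := by omega
      rw [ext_lt f c (by omega)] at hf2
      rw [ext_ge f c (by omega)] at hf1
      refine h2 hf1 (by omega) ?_
      rw [show (⟨n - 1, by omega⟩ : Fin n) = ⟨i, by omega⟩ from Fin.ext (by simp; omega)]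
      exact hf2
lemma Cthree_ext (f : Fin n → Fin 3) (c : Fin 3) :
    Cthree (n + 1) (ext f c) ↔ c ≠ 2 := by
  constructor
  · intro h hc
    have := h n (by omega) (by rw [ext_ge f c (lt_irrefl n)]; exact hc)
    omega
  · intro hc i hi hf
    by_cases h : i < n
    · omega
    · have : i = n := by omega
      subst this
      rw [ext_ge f c h] at hf
      exact absurd hf hc
lemma Cthree_iff (hn : 0 < n) (f : Fin n → Fin 3) :
    Cthree n f ↔ f ⟨n - 1, by omega⟩ ≠ 2 := by
  constructor
  · intro h hf
    have := h (n - 1) (by omega) hf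
    omega
  · intro h i hi hf
    by_cases hin : i + 1 < n
    · exact hin
    · have : i = n - 1 := by omega
      subst this
      exact absurd hf h

-- counting section (to be appended inside namespace PFaux)

def ZP (n : ℕ) (f : Fin n → Fin 3) : Prop := Cone n f ∧ Ctwo n f
def YP (n : ℕ) (f : Fin n → Fin 3) : Prop := Cone n f ∧ Ctwo n f ∧ Cthree n f

noncomputable def Zc (n : ℕ) : ℕ := Nat.card {f : Fin n → Fin 3 // ZP n f}
noncomputable def Yc (n : ℕ) : ℕ := Nat.card {f : Fin n → Fin 3 // YP n f}

lemma ZP_ext0 (hn : 0 < n) (f : Fin n → Fin 3) : ZP (n + 1) (ext f 0) ↔ ZP n f := by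
  unfold ZP
  rw [Cone_ext, Ctwo_ext]
  simp
lemma ZP_ext1 (hn : 0 < n) (f : Fin n → Fin 3) : ZP (n + 1) (ext f 1) ↔ YP n f := by
  unfold ZP YP
  rw [Cone_ext, Ctwo_ext, Cthree_iff hn]
  simp [hn]
lemma ZP_ext2 (hn : 0 < n) (f : Fin n → Fin 3) : ZP (n + 1) (ext f 2) ↔ ZP n f := by
  unfold ZP
  rw [Cone_ext, Ctwo_ext]
  simp
lemma YP_ext0 (hn : 0 < n) (f : Fin n → Fin 3) : YP (n + 1) (ext f 0) ↔ ZP n f := by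
  unfold YP ZP
  rw [Cone_ext, Ctwo_ext, Cthree_ext]
  simp
lemma YP_ext1 (hn : 0 < n) (f : Fin n → Fin 3) : YP (n + 1) (ext f 1) ↔ YP n f := by
  unfold YP
  rw [Cone_ext, Ctwo_ext, Cthree_ext, Cthree_iff hn]
  simp [hn]
lemma YP_ext2 (hn : 0 < n) (f : Fin n → Fin 3) : YP (n + 1) (ext f 2) ↔ False := by
  unfold YP
  rw [Cone_ext, Ctwo_ext, Cthree_ext]
  simp

lemma Zc_succ (hn : 0 < n) : Zc (n + 1) = Zc n + Yc n + Zc n := by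
  unfold Zc Yc
  rw [card_split (ZP (n + 1)), Fin.sum_univ_three]
  rw [Nat.card_congr (extEquiv 0 _ _ (ZP_ext0 hn)),
    Nat.card_congr (extEquiv 1 _ _ (ZP_ext1 hn)),
    Nat.card_congr (extEquiv 2 _ _ (ZP_ext2 hn))]
lemma Yc_succ (hn : 0 < n) : Yc (n + 1) = Zc n + Yc n := by
  unfold Zc Yc
  rw [card_split (YP (n + 1)), Fin.sum_univ_three]
  rw [Nat.card_congr (extEquiv 0 _ _ (YP_ext0 hn)),
    Nat.card_congr (extEquiv 1 _ _ (YP_ext1 hn)),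
    Nat.card_congr (extEquiv 2 _ _ (YP_ext2 hn))]
  simp [Nat.card_eq_fintype_card]

def one_equivZ : {f : Fin 1 → Fin 3 // ZP 1 f} ≃ {c : Fin 3 // c ≠ 1} where
  toFun f := ⟨f.1 0, by
    intro h
    have := f.2.1 0 (by omega) h
    omega⟩
  invFun c := ⟨fun _ => c.1, by
    constructor
    · intro i hi hf
      interval_cases i
      exact absurd hf c.2
    · intro i hi
      omega⟩
  left_inv f := by
    apply Subtype.ext
    funext v
    have : v = 0 := by omega
    rw [this]
  right_inv c := rfl

def one_equivY : {f : Fin 1 → Fin 3 // YP 1 f} ≃ {c : Fin 3 // c ≠ 1 ∧ c ≠ 2} where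
  toFun f := ⟨f.1 0, by
    constructor
    · intro h
      have := f.2.1 0 (by omega) h
      omega
    · intro h
      have := f.2.2.2 0 (by omega) h
      omega⟩
  invFun c := ⟨fun _ => c.1, by
    refine ⟨?_, ?_, ?_⟩
    · intro i hi hf
      interval_cases i
      exact absurd hf c.2.1
    · intro i hi
      omega
    · intro i hi hf
      interval_cases i
      exact absurd hf c.2.2⟩
  left_inv f := by
    apply Subtype.ext
    funext v
    have : v = 0 := by omega
    rw [this]
  right_inv c := rfl

lemma Zc_one : Zc 1 = 2 := by
  unfold Zc
  rw [Nat.card_congr one_equivZ, Nat.card_eq_fintype_card]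
  decide
lemma Yc_one : Yc 1 = 1 := by
  unfold Yc
  rw [Nat.card_congr one_equivY, Nat.card_eq_fintype_card]
  decide

lemma ZY_fib : ∀ n, 0 < n → Zc n = Nat.fib (2 * n + 1) ∧ Yc n = Nat.fib (2 * n) := by
  intro n
  induction n with
  | zero => omega
  | succ m ih =>
    intro _
    by_cases hm : 0 < m
    · obtain ⟨hz, hy⟩ := ih hm
      rw [Zc_succ hm, Yc_succ hm, hz, hy]
      constructor
      · rw [show 2 * (m + 1) + 1 = (2 * m + 1) + 2 by ring, Nat.fib_add_two,
          show 2 * m + 1 + 1 = (2 * m) + 2 by ring, Nat.fib_add_two]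
        ring
      · rw [show 2 * (m + 1) = (2 * m) + 2 by ring, Nat.fib_add_two]
        ring
    · have : m = 0 := by omega
      subst this
      rw [Zc_one, Yc_one]
      constructor <;> rfl

-- Part A : graph section
open SimpleGraph

def Ef (f : Fin n → Fin 3) : Set (Sym2 (Fin n)) :=
  {e | ∃ (i : ℕ) (h : i + 1 < n), e = s(⟨i, by omega⟩, ⟨i + 1, h⟩) ∧
    (f ⟨i, by omega⟩ = 2 ∨ f ⟨i + 1, h⟩ = 1)}

def Seg (H : SimpleGraph (Fin n)) (x y : ℕ) : Prop :=
  ∀ k, x ≤ k → k < y → ∃ a b : Fin n, (a : ℕ) = k ∧ (b : ℕ) = k + 1 ∧ H.Adj a b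

lemma reach_to_seg {H : SimpleGraph (Fin n)}
    (hH : ∀ a b : Fin n, H.Adj a b → (a : ℕ) + 1 = b ∨ (b : ℕ) + 1 = a)
    {u v : Fin n} (h : H.Reachable u v) : Seg H (min u.1 v.1) (max u.1 v.1) := by
  obtain ⟨w⟩ := h
  induction w with
  | nil => intro k h1 h2; omega
  | @cons u x v h' p ih =>
    intro k h1 h2
    rcases hH _ _ h' with hx | hx
    · by_cases hk : min x.1 v.1 ≤ k ∧ k < max x.1 v.1
      · exact ih k hk.1 hk.2
      · exact ⟨u, x, by omega, by omega, h'⟩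
    · by_cases hk : min x.1 v.1 ≤ k ∧ k < max x.1 v.1
      · exact ih k hk.1 hk.2
      · exact ⟨x, u, by omega, by omega, h'.symm⟩

lemma seg_to_reach_aux {H : SimpleGraph (Fin n)} :
    ∀ d (u v : Fin n), u.1 ≤ v.1 → v.1 - u.1 = d → Seg H u.1 v.1 → H.Reachable u v := by
  intro d
  induction d with
  | zero =>
    intro u v h1 h2 _
    have : u = v := Fin.ext (by omega)
    subst this
    exact Reachable.refl u
  | succ d ih =>
    intro u v h1 h2 hseg
    obtain ⟨a, b, ha, hb, hadj⟩ := hseg u.1 le_rfl (by omega)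
    have hau : a = u := Fin.ext ha
    subst hau
    refine (hadj.reachable).trans (ih b v (by omega) (by omega) ?_)
    intro k hk1 hk2
    exact hseg k (by omega) hk2

lemma seg_to_reach {H : SimpleGraph (Fin n)} {u v : Fin n}
    (h : Seg H (min u.1 v.1) (max u.1 v.1)) : H.Reachable u v := by
  rcases le_total u.1 v.1 with h' | h'
  · refine seg_to_reach_aux _ u v h' rfl ?_
    rwa [min_eq_left h', max_eq_right h'] at h
  · refine (seg_to_reach_aux _ v u h' rfl ?_).symm
    rwa [min_eq_right h', max_eq_left h'] at h

lemma pair_eq {i j : ℕ} (hi : i + 1 < n) (hj : j + 1 < n)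
    (h : s((⟨i, by omega⟩ : Fin n), ⟨i + 1, hi⟩) = s((⟨j, by omega⟩ : Fin n), ⟨j + 1, hj⟩)) :
    i = j := by
  rw [Sym2.eq_iff] at h
  rcases h with ⟨h1, h2⟩ | ⟨h1, h2⟩
  · simpa [Fin.mk.injEq] using h1
  · simp only [Fin.mk.injEq] at h1 h2
    omega

lemma Gf_adj_pair {f : Fin n → Fin 3} {i : ℕ} (h : i + 1 < n) :
    (fromEdgeSet (Ef f)).Adj ⟨i, by omega⟩ ⟨i + 1, h⟩ ↔
      (f ⟨i, by omega⟩ = 2 ∨ f ⟨i + 1, h⟩ = 1) := by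
  rw [fromEdgeSet_adj]
  constructor
  · rintro ⟨⟨j, hj, heq, hd⟩, -⟩
    have : i = j := pair_eq h hj heq
    subst this
    exact hd
  · intro hd
    exact ⟨⟨i, h, rfl, hd⟩, Fin.ne_of_val_ne (show i ≠ i + 1 by omega)⟩

lemma Gf_consec {f : Fin n → Fin 3} :
    ∀ a b : Fin n, (fromEdgeSet (Ef f)).Adj a b → (a : ℕ) + 1 = b ∨ (b : ℕ) + 1 = a := by
  intro a b h
  rw [fromEdgeSet_adj] at h
  obtain ⟨⟨i, hi, heq, -⟩, -⟩ := h
  rw [Sym2.eq_iff] at heq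
  rcases heq with ⟨h1, h2⟩ | ⟨h1, h2⟩
  · subst h1; subst h2; left; rfl
  · subst h1; subst h2; right; rfl

lemma adj_disj {f : Fin n → Fin 3} {a b : Fin n} (h : (fromEdgeSet (Ef f)).Adj a b)
    (hab : (a : ℕ) + 1 = b) : f a = 2 ∨ f b = 1 := by
  rw [fromEdgeSet_adj] at h
  obtain ⟨⟨i, hi, heq, hd⟩, -⟩ := h
  rw [Sym2.eq_iff] at heq
  rcases heq with ⟨h1, h2⟩ | ⟨h1, h2⟩
  · subst h1; subst h2; exact hd
  · subst h1; subst h2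
    have : i + 1 + 1 = i := hab
    omega

lemma exroot_left {f : Fin n → Fin 3} (hc1 : Cone n f) (hc2 : Ctwo n f) :
    ∀ m (v : Fin n), v.1 ≤ m → f v = 1 →
      ∃ r : Fin n, f r = 0 ∧ (fromEdgeSet (Ef f)).Reachable v r ∧ (r : ℕ) < (v : ℕ) := by
  intro m
  induction m with
  | zero =>
    intro v hv hfv
    have := hc1 v.1 v.2 hfv
    omega
  | succ m ih =>
    intro v hv hfv
    have hpos : 0 < v.1 := hc1 v.1 v.2 hfv
    have hvn : v.1 - 1 + 1 < n := by have := v.2; omega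
    have hveq : (⟨v.1 - 1 + 1, hvn⟩ : Fin n) = v := Fin.ext (show v.1 - 1 + 1 = v.1 by omega)
    have hadj : (fromEdgeSet (Ef f)).Adj ⟨v.1 - 1, by omega⟩ v := by
      have h0 : (fromEdgeSet (Ef f)).Adj ⟨v.1 - 1, by omega⟩ ⟨v.1 - 1 + 1, hvn⟩ :=
        (Gf_adj_pair (f := f) hvn).2 (Or.inr (by rw [hveq]; exact hfv))
      rwa [hveq] at h0
    have hu2 : f ⟨v.1 - 1, by omega⟩ ≠ 2 := by
      intro h2
      exact hc2 (v.1 - 1) hvn h2 (by rw [hveq]; exact hfv) 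
    rcases fin3 (f ⟨v.1 - 1, by omega⟩) with h0 | h01 | h02
    · exact ⟨⟨v.1 - 1, by omega⟩, h0, hadj.symm.reachable, show v.1 - 1 < v.1 by omega⟩
    · obtain ⟨r, hr0, hrr, hrlt⟩ := ih ⟨v.1 - 1, by omega⟩ (show v.1 - 1 ≤ m by omega) h01
      have hrlt' : (r : ℕ) < v.1 - 1 := hrlt
      exact ⟨r, hr0, (hadj.symm.reachable).trans hrr, by omega⟩
    · exact absurd h02 hu2

lemma exroot_right {f : Fin n → Fin 3} (hc2 : Ctwo n f) (hc3 : Cthree n f) :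
    ∀ m (v : Fin n), n - v.1 ≤ m → f v = 2 →
      ∃ r : Fin n, f r = 0 ∧ (fromEdgeSet (Ef f)).Reachable v r ∧ (v : ℕ) < (r : ℕ) := by
  intro m
  induction m with
  | zero =>
    intro v hv hfv
    have := v.2
    omega
  | succ m ih =>
    intro v hv hfv
    have hvn : v.1 + 1 < n := hc3 v.1 v.2 hfv
    have hadj : (fromEdgeSet (Ef f)).Adj v ⟨v.1 + 1, hvn⟩ := by
      exact (Gf_adj_pair hvn).2 (Or.inl hfv)
    have hw1 : f ⟨v.1 + 1, hvn⟩ ≠ 1 := hc2 v.1 hvn hfv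
    rcases fin3 (f ⟨v.1 + 1, hvn⟩) with h0 | h01 | h02
    · exact ⟨⟨v.1 + 1, hvn⟩, h0, hadj.reachable, show v.1 < v.1 + 1 by omega⟩
    · exact absurd h01 hw1
    · obtain ⟨r, hr0, hrr, hrgt⟩ := ih ⟨v.1 + 1, hvn⟩ (show n - (v.1 + 1) ≤ m by omega) h02
      have hrgt' : v.1 + 1 < (r : ℕ) := hrgt
      exact ⟨r, hr0, hadj.reachable.trans hrr, by omega⟩

lemma chain_ones {f : Fin n → Fin 3} {a b : Fin n} (ha : f a = 0)
    (hseg : Seg (fromEdgeSet (Ef f)) a.1 b.1) :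
    ∀ d (j : ℕ) (hj : j < n), j = a.1 + d → 0 < d → j ≤ b.1 → f ⟨j, hj⟩ = 1 := by
  intro d
  induction d with
  | zero => intro j hj h1 h2 h3; omega
  | succ d ih =>
    intro j hj hja hd hjb
    obtain ⟨x, y, hx, hy, hadj⟩ := hseg (j - 1) (by omega) (by omega)
    have hy' : y = ⟨j, hj⟩ := Fin.ext (show (y : ℕ) = j by omega)
    have hdisj := adj_disj hadj (by omega)
    rcases hdisj with h2 | h1
    · exfalso
      by_cases hd0 : d = 0
      · have hx' : x = a := Fin.ext (by omega)
        rw [hx', ha] at h2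
        exact absurd h2 (by decide)
      · have hone := ih (j - 1) (by omega) (by omega) (by omega) (by omega)
        rw [show x = (⟨j - 1, by omega⟩ : Fin n) from Fin.ext (show (x : ℕ) = j - 1 by omega)] at h2
        rw [hone] at h2
        exact absurd h2 (by decide)
    · rwa [hy'] at h1

lemma root_eq_le {f : Fin n → Fin 3} {a b : Fin n} (ha : f a = 0) (hb : f b = 0)
    (hle : a.1 ≤ b.1) (hseg : Seg (fromEdgeSet (Ef f)) a.1 b.1) : a = b := by
  rcases Nat.eq_or_lt_of_le hle with heq | hlt
  · exact Fin.ext heq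
  · exfalso
    have := chain_ones ha hseg (b.1 - a.1) b.1 b.2 (by omega) (by omega) le_rfl
    rw [Fin.eta] at this
    rw [hb] at this
    exact absurd this (by decide)

lemma root_eq {f : Fin n → Fin 3} {a b : Fin n} (ha : f a = 0) (hb : f b = 0)
    (h : (fromEdgeSet (Ef f)).Reachable a b) : a = b := by
  have hseg := reach_to_seg Gf_consec h
  rcases le_total a.1 b.1 with hle | hle
  · exact root_eq_le ha hb hle (by rwa [min_eq_left hle, max_eq_right hle] at hseg)
  · exact (root_eq_le hb ha hle (by rwa [min_eq_right hle, max_eq_left hle] at hseg)).symm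

lemma Gf_acyclic (f : Fin n → Fin 3) : (fromEdgeSet (Ef f)).IsAcyclic := by
  rw [isAcyclic_iff_forall_edge_isBridge]
  intro e he
  rw [edgeSet_fromEdgeSet] at he
  obtain ⟨⟨i, hi, rfl, hd⟩, -⟩ := he
  rw [isBridge_iff]
  · intro hreach
    have hcon : ∀ a b : Fin n,
        ((fromEdgeSet (Ef f)) \
          fromEdgeSet {s((⟨i, by omega⟩ : Fin n), ⟨i + 1, hi⟩)}).Adj a b →
        (a : ℕ) + 1 = b ∨ (b : ℕ) + 1 = a := by
      intro a b h
      exact Gf_consec a b ((sdiff_adj _ _ _ _).1 h).1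
    have hseg := reach_to_seg hcon hreach
    obtain ⟨a, b, ha, hb, hadj⟩ :=
      hseg i (show min i (i + 1) ≤ i by omega) (show i < max i (i + 1) by omega)
    have hin : i < n := Nat.lt_of_succ_lt hi
    have ha' : a = (⟨i, hin⟩ : Fin n) := Fin.ext ha
    have hb' : b = (⟨i + 1, hi⟩ : Fin n) := Fin.ext hb
    rw [ha', hb', sdiff_adj] at hadj
    exact hadj.2 ((fromEdgeSet_adj _).2 ⟨rfl, Fin.ne_of_val_ne (show i ≠ i + 1 by omega)⟩)

def toRF (f : Fin n → Fin 3) (h1 : Cone n f) (h2 : Ctwo n f) (h3 : Cthree n f) :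
    RootedForest (SimpleGraph.pathGraph n) where
  edges := Ef f
  roots := {v | f v = 0}
  edges_sub := by
    rintro e ⟨i, hi, rfl, -⟩
    rw [mem_edgeSet, pathGraph_adj]
    left
    rfl
  acyclic := Gf_acyclic f
  unique_root := by
    intro v
    rcases fin3 (f v) with h0 | h01 | h02
    · exact ⟨v, ⟨h0, Reachable.refl v⟩, fun y hy => root_eq hy.1 h0 hy.2.symm⟩
    · obtain ⟨r, hr0, hrr, -⟩ := exroot_left h1 h2 v.1 v le_rfl h01
      exact ⟨r, ⟨hr0, hrr⟩, fun y hy => root_eq hy.1 hr0 (hy.2.symm.trans hrr)⟩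
    · obtain ⟨r, hr0, hrr, -⟩ := exroot_right h2 h3 (n - v.1) v le_rfl h02
      exact ⟨r, ⟨hr0, hrr⟩, fun y hy => root_eq hy.1 hr0 (hy.2.symm.trans hrr)⟩

-- Bijection section

lemma inj_aux {f g : Fin n → Fin 3}
    (hfv : Cone n f ∧ Ctwo n f ∧ Cthree n f) (hgv : Cone n g ∧ Ctwo n g ∧ Cthree n g)
    (hE : Ef f = Ef g) (hR : {v | f v = 0} = {v | g v = 0})
    {v : Fin n} (h1 : f v = 1) (h2 : g v = 2) : False := by
  obtain ⟨r, hr0, hrr, hrlt⟩ := exroot_left hfv.1 hfv.2.1 v.1 v le_rfl h1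
  obtain ⟨r', hr'0, hrr', hr'gt⟩ := exroot_right hgv.2.1 hgv.2.2 (n - v.1) v le_rfl h2
  have hGr : fromEdgeSet (Ef f) = fromEdgeSet (Ef g) := by rw [hE]
  have hg_r : g r = 0 := (Set.ext_iff.1 hR r).1 hr0
  have heq : r = r' := root_eq hg_r hr'0 ((hGr ▸ hrr).symm.trans hrr')
  subst heq
  omega

lemma toRF_injective :
    Function.Injective
      (fun f : {f : Fin n → Fin 3 // Cone n f ∧ Ctwo n f ∧ Cthree n f} =>
        toRF f.1 f.2.1 f.2.2.1 f.2.2.2) := by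
  rintro ⟨f, hf⟩ ⟨g, hg⟩ h
  have hE : Ef f = Ef g := congrArg RootedForest.edges h
  have hR : {v | f v = 0} = {v | g v = 0} := congrArg RootedForest.roots h
  apply Subtype.ext
  funext v
  rcases fin3 (f v) with ha | ha | ha <;> rcases fin3 (g v) with hb | hb | hb
  · show f v = g v
    rw [ha, hb]
  · exfalso
    have h0 : g v = 0 := (Set.ext_iff.1 hR v).1 ha
    rw [h0] at hb
    exact absurd hb (by decide)
  · exfalso
    have h0 : g v = 0 := (Set.ext_iff.1 hR v).1 ha
    rw [h0] at hb
    exact absurd hb (by decide)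
  · exfalso
    have h0 : f v = 0 := (Set.ext_iff.1 hR v).2 hb
    rw [h0] at ha
    exact absurd ha (by decide)
  · show f v = g v
    rw [ha, hb]
  · exact absurd (inj_aux hf hg hE hR ha hb) id
  · exfalso
    have h0 : f v = 0 := (Set.ext_iff.1 hR v).2 hb
    rw [h0] at ha
    exact absurd ha (by decide)
  · exact absurd (inj_aux hg hf hE.symm hR.symm hb ha) id
  · show f v = g v
    rw [ha, hb]

noncomputable def rootOf (φ : RootedForest (SimpleGraph.pathGraph n)) (v : Fin n) : Fin n :=
  (φ.unique_root v).choose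

lemma rootOf_spec (φ : RootedForest (SimpleGraph.pathGraph n)) (v : Fin n) :
    rootOf φ v ∈ φ.roots ∧ (fromEdgeSet φ.edges).Reachable v (rootOf φ v) :=
  (φ.unique_root v).choose_spec.1

lemma rootOf_unique (φ : RootedForest (SimpleGraph.pathGraph n)) {v y : Fin n}
    (hy : y ∈ φ.roots) (hr : (fromEdgeSet φ.edges).Reachable v y) : y = rootOf φ v :=
  (φ.unique_root v).choose_spec.2 y ⟨hy, hr⟩

lemma rootOf_congr (φ : RootedForest (SimpleGraph.pathGraph n)) {v w : Fin n}
    (h : (fromEdgeSet φ.edges).Reachable v w) : rootOf φ v = rootOf φ w :=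
  rootOf_unique φ (rootOf_spec φ v).1 (h.symm.trans (rootOf_spec φ v).2)

noncomputable def ffor (φ : RootedForest (SimpleGraph.pathGraph n)) : Fin n → Fin 3 :=
  fun v =>
    letI := Classical.dec (v ∈ φ.roots)
    if v ∈ φ.roots then 0 else if (rootOf φ v : ℕ) < (v : ℕ) then 1 else 2

lemma ffor_spec (φ : RootedForest (SimpleGraph.pathGraph n)) (v : Fin n) :
    (ffor φ v = 0 ∧ v ∈ φ.roots ∧ rootOf φ v = v) ∨
    (ffor φ v = 1 ∧ v ∉ φ.roots ∧ (rootOf φ v : ℕ) < (v : ℕ)) ∨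
    (ffor φ v = 2 ∧ v ∉ φ.roots ∧ (v : ℕ) < (rootOf φ v : ℕ)) := by
  by_cases hv : v ∈ φ.roots
  · exact Or.inl ⟨by simp [ffor, hv], hv,
      (rootOf_unique φ hv (Reachable.refl v)).symm⟩
  · by_cases hlt : (rootOf φ v : ℕ) < (v : ℕ)
    · exact Or.inr (Or.inl ⟨by simp [ffor, hv, hlt], hv, hlt⟩)
    · refine Or.inr (Or.inr ⟨by simp [ffor, hv, hlt], hv, ?_⟩)
      have hne : rootOf φ v ≠ v := fun h => hv (h ▸ (rootOf_spec φ v).1)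
      have hne' : (rootOf φ v : ℕ) ≠ (v : ℕ) := fun h => hne (Fin.ext h)
      omega

lemma RF_consec (φ : RootedForest (SimpleGraph.pathGraph n)) :
    ∀ a b : Fin n, (fromEdgeSet φ.edges).Adj a b → (a : ℕ) + 1 = b ∨ (b : ℕ) + 1 = a := by
  intro a b h
  have := φ.edges_sub ((fromEdgeSet_adj _).1 h).1
  rw [mem_edgeSet, pathGraph_adj] at this
  exact this

lemma RF_edge (φ : RootedForest (SimpleGraph.pathGraph n)) {v w : Fin n}
    (h : (fromEdgeSet φ.edges).Reachable v w) (k : ℕ) (hk : k + 1 < n)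
    (h1 : min (v : ℕ) (w : ℕ) ≤ k) (h2 : k < max (v : ℕ) (w : ℕ)) :
    s((⟨k, Nat.lt_of_succ_lt hk⟩ : Fin n), ⟨k + 1, hk⟩) ∈ φ.edges := by
  obtain ⟨a, b, ha, hb, hadj⟩ := reach_to_seg (RF_consec φ) h k h1 h2
  have ha' : a = (⟨k, Nat.lt_of_succ_lt hk⟩ : Fin n) := Fin.ext ha
  have hb' : b = (⟨k + 1, hk⟩ : Fin n) := Fin.ext hb
  rw [ha', hb'] at hadj
  exact ((fromEdgeSet_adj _).1 hadj).1

lemma RF_adj (φ : RootedForest (SimpleGraph.pathGraph n)) {k : ℕ} (hk : k + 1 < n)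
    (h : s((⟨k, Nat.lt_of_succ_lt hk⟩ : Fin n), ⟨k + 1, hk⟩) ∈ φ.edges) :
    (fromEdgeSet φ.edges).Adj ⟨k, Nat.lt_of_succ_lt hk⟩ ⟨k + 1, hk⟩ :=
  (fromEdgeSet_adj _).2 ⟨h, Fin.ne_of_val_ne (show k ≠ k + 1 by omega)⟩

lemma ffor_valid (φ : RootedForest (SimpleGraph.pathGraph n)) :
    Cone n (ffor φ) ∧ Ctwo n (ffor φ) ∧ Cthree n (ffor φ) := by
  refine ⟨?_, ?_, ?_⟩
  · intro i hi hf
    rcases ffor_spec φ ⟨i, hi⟩ with ⟨h, -⟩ | ⟨-, -, hlt⟩ | ⟨h, -⟩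
    · rw [h] at hf; exact absurd hf (by decide)
    · have : (rootOf φ ⟨i, hi⟩ : ℕ) < i := hlt
      omega
    · rw [h] at hf; exact absurd hf (by decide)
  · intro i hi h2 h1
    have hii : i < n := Nat.lt_of_succ_lt hi
    rcases ffor_spec φ ⟨i, hii⟩ with ⟨h, -⟩ | ⟨h, -⟩ | ⟨-, -, hv⟩
    · rw [h2] at h; exact absurd h (by decide)
    · rw [h2] at h; exact absurd h (by decide)
    rcases ffor_spec φ ⟨i + 1, hi⟩ with ⟨h, -⟩ | ⟨-, -, hw⟩ | ⟨h, -⟩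
    · rw [h1] at h; exact absurd h (by decide)
    swap
    · rw [h1] at h; exact absurd h (by decide)
    have hv' : i < (rootOf φ ⟨i, hii⟩ : ℕ) := hv
    have hw' : (rootOf φ ⟨i + 1, hi⟩ : ℕ) < i + 1 := hw
    have hreach := (rootOf_spec φ ⟨i, hii⟩).2
    have hedge := RF_edge φ hreach i hi
      (show min i (rootOf φ ⟨i, hii⟩ : ℕ) ≤ i by omega)
      (show i < max i (rootOf φ ⟨i, hii⟩ : ℕ) by omega)
    have hadj := RF_adj φ hi hedge
    have hr := rootOf_congr φ hadj.reachable
    have hr' : (rootOf φ ⟨i, hii⟩ : ℕ) = (rootOf φ ⟨i + 1, hi⟩ : ℕ) := congrArg Fin.val hr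
    omega
  · intro i hi h2
    rcases ffor_spec φ ⟨i, hi⟩ with ⟨h, -⟩ | ⟨h, -⟩ | ⟨-, -, hv⟩
    · rw [h2] at h; exact absurd h (by decide)
    · rw [h2] at h; exact absurd h (by decide)
    · have hv' : i < (rootOf φ ⟨i, hi⟩ : ℕ) := hv
      have := (rootOf φ ⟨i, hi⟩).2
      omega

lemma roots_eq (φ : RootedForest (SimpleGraph.pathGraph n)) :
    {v | ffor φ v = 0} = φ.roots := by
  ext v
  simp only [Set.mem_setOf_eq]
  constructor
  · intro h
    rcases ffor_spec φ v with ⟨-, hv, -⟩ | ⟨h1, -⟩ | ⟨h1, -⟩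
    · exact hv
    · rw [h] at h1; exact absurd h1 (by decide)
    · rw [h] at h1; exact absurd h1 (by decide)
  · intro hv
    rcases ffor_spec φ v with ⟨h0, -⟩ | ⟨-, hnv, -⟩ | ⟨-, hnv, -⟩
    · exact h0
    · exact absurd hv hnv
    · exact absurd hv hnv

lemma mem_Ef_of (φ : RootedForest (SimpleGraph.pathGraph n)) {a b : Fin n}
    (hab : (a : ℕ) + 1 = (b : ℕ)) (he : s(a, b) ∈ φ.edges) : s(a, b) ∈ Ef (ffor φ) := by
  have hbn : (a : ℕ) + 1 < n := by have := b.2; omega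
  have hadj : (fromEdgeSet φ.edges).Adj a b :=
    (fromEdgeSet_adj _).2 ⟨he, Fin.ne_of_val_ne (by omega)⟩
  have hr := rootOf_congr φ hadj.reachable
  rcases le_or_gt (rootOf φ a : ℕ) (a : ℕ) with hle | hlt
  · rcases ffor_spec φ b with ⟨-, -, hρb⟩ | ⟨h1, -, -⟩ | ⟨-, -, hgt⟩
    · exfalso
      have : (rootOf φ a : ℕ) = (b : ℕ) := congrArg Fin.val (hr.trans hρb)
      omega
    · refine ⟨(a : ℕ), hbn, ?_, Or.inr ?_⟩
      · exact congrArg₂ (fun x y => s(x, y)) (Fin.ext rfl) (Fin.ext hab.symm)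
      · rw [show (⟨(a : ℕ) + 1, hbn⟩ : Fin n) = b from Fin.ext hab]
        exact h1
    · exfalso
      have h3 : (b : ℕ) < (rootOf φ b : ℕ) := hgt
      have h4 : (rootOf φ a : ℕ) = (rootOf φ b : ℕ) := congrArg Fin.val hr
      omega
  · rcases ffor_spec φ a with ⟨-, -, hρa⟩ | ⟨-, -, hlt'⟩ | ⟨h2, -, -⟩
    · exfalso
      have : (rootOf φ a : ℕ) = (a : ℕ) := congrArg Fin.val hρa
      omega
    · omega
    · refine ⟨(a : ℕ), hbn, ?_, Or.inl ?_⟩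
      · exact congrArg₂ (fun x y => s(x, y)) (Fin.ext rfl) (Fin.ext hab.symm)
      · rw [show (⟨(a : ℕ), Nat.lt_of_succ_lt hbn⟩ : Fin n) = a from Fin.ext rfl]
        exact h2

lemma edges_eq (φ : RootedForest (SimpleGraph.pathGraph n)) :
    Ef (ffor φ) = φ.edges := by
  ext e
  induction e using Sym2.ind with
  | _ x y =>
    constructor
    · rintro ⟨i, hi, heq, hd⟩
      rw [heq]
      rcases hd with h2 | h1
      · rcases ffor_spec φ ⟨i, by omega⟩ with ⟨h, -⟩ | ⟨h, -⟩ | ⟨-, -, hv⟩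
        · rw [h2] at h; exact absurd h (by decide)
        · rw [h2] at h; exact absurd h (by decide)
        · have hv' : i < (rootOf φ ⟨i, by omega⟩ : ℕ) := hv
          exact RF_edge φ (rootOf_spec φ ⟨i, by omega⟩).2 i hi
            (show min i _ ≤ i by omega) (show i < max i _ by omega)
      · rcases ffor_spec φ ⟨i + 1, hi⟩ with ⟨h, -⟩ | ⟨-, -, hv⟩ | ⟨h, -⟩
        · rw [h1] at h; exact absurd h (by decide)
        swap
        · rw [h1] at h; exact absurd h (by decide)
        have hv' : (rootOf φ ⟨i + 1, hi⟩ : ℕ) < i + 1 := hv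
        have := RF_edge φ (rootOf_spec φ ⟨i + 1, hi⟩).2 i hi
          (show min (i + 1) (rootOf φ ⟨i + 1, hi⟩ : ℕ) ≤ i by omega)
          (show i < max (i + 1) (rootOf φ ⟨i + 1, hi⟩ : ℕ) by omega)
        exact this
    · intro he
      have hadj : (SimpleGraph.pathGraph n).Adj x y := (mem_edgeSet _).1 (φ.edges_sub he)
      rcases pathGraph_adj.1 hadj with hxy | hxy
      · exact mem_Ef_of φ hxy he
      · have he' : s(y, x) ∈ φ.edges := by rwa [Sym2.eq_swap] at he
        have hm := mem_Ef_of φ hxy he'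
        rwa [Sym2.eq_swap] at hm

lemma RF_ext {G : SimpleGraph (Fin n)} {A B : RootedForest G}
    (h1 : A.edges = B.edges) (h2 : A.roots = B.roots) : A = B := by
  cases A
  cases B
  simp only [RootedForest.mk.injEq]
  simp only at h1 h2
  exact ⟨h1, h2⟩

lemma card_RF (n : ℕ) :
    Nat.card (RootedForest (SimpleGraph.pathGraph n)) = Yc n := by
  refine (Nat.card_eq_of_bijective
    (fun f : {f : Fin n → Fin 3 // Cone n f ∧ Ctwo n f ∧ Cthree n f} =>
      toRF f.1 f.2.1 f.2.2.1 f.2.2.2) ⟨toRF_injective, ?_⟩).symm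
  intro φ
  refine ⟨⟨ffor φ, (ffor_valid φ).1, (ffor_valid φ).2.1, (ffor_valid φ).2.2⟩, ?_⟩
  exact RF_ext (edges_eq φ) (roots_eq φ)

end PFaux




theorem path_forest_count (n : ℕ) (hn : 1 ≤ n) :
    Nat.card (RootedForest (SimpleGraph.pathGraph n)) = Nat.fib (2 * n) := by
  rw [PFaux.card_RF]
  exact (PFaux.ZY_fib n hn).2
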